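/- Let Q be a nondegenerate (-1)^k-symmetric bilinear form on a finite-dimensional vector space V over a field of characteristic zero, and suppose k + ℓ is odd. If N ∈ End(V,Q) is the nilnegative element of a standard triple in End(V,Q) with isotypic multiplicities m_ℓ, then m_ℓ is even. -/

import Mathlib

open Polynomial Module

set_option linter.unusedSectionVars false
set_option maxHeartbeats 1000000

namespace MultParityAux

variable {K : Type*} [Field K] [CharZero K]
variable {V : Type*} [AddCommGroup V] [Module K V] [FiniteDimensional K V]

lemma comm_pow_apply {Y A : Module.End K V} {c : K}
    (h : ∀ v, Y (A v) = A (Y v) + c • A v) (j : ℕ) (v : V) :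
    Y ((A ^ j) v) = (A ^ j) (Y v) + (c * j) • (A ^ j) v := by
  induction j generalizing v with
  | zero => simp
  | succ j ih =>
    have h1 : ∀ w : V, (A ^ (j+1)) w = (A ^ j) (A w) := fun w => by
      rw [pow_succ, Module.End.mul_apply]
    rw [h1, ih (A v), h, map_add, map_smul, h1 (Y v)]
    push_cast
    module

lemma M_pow_N_apply {M Y N : Module.End K V}
    (eMN : ∀ v, M (N v) = N (M v) + Y v)
    (eYN : ∀ v, Y (N v) = N (Y v) + (-2:K) • N v) (j : ℕ) (v : V) :
    M ((N ^ (j+1)) v) = (N ^ (j+1)) (M v) + ((j:K)+1) • (N ^ j) (Y v)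
      - (((j:K)+1) * (j:K)) • (N ^ j) v := by
  induction j generalizing v with
  | zero => simp [eMN v]
  | succ j ih =>
    have e2 : ∀ w : V, (N ^ (j + 1)) w = (N ^ j) (N w) := fun w => by
      rw [pow_succ, Module.End.mul_apply]
    have e3 : ∀ w : V, (N ^ (j + 2)) w = (N ^ (j+1)) (N w) := fun w => by
      rw [pow_succ, Module.End.mul_apply]
    rw [e3, e3, ih (N v), eMN v, eYN v, map_add, map_add, map_smul,
      e2 (Y v), e2 v]
    push_cast
    module

lemma pow_eigen_apply {f : Module.End K V} {c : K} {v : V} (h : f v = c • v) (n : ℕ) :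
    (f ^ n) v = c ^ n • v := by
  induction n with
  | zero => simp
  | succ n ih =>
    rw [pow_succ, Module.End.mul_apply, h, map_smul, ih, smul_smul, ← pow_succ']

lemma aeval_eigen_apply {f : Module.End K V} {c : K} {v : V} (h : f v = c • v) (p : K[X]) :
    aeval f p v = p.eval c • v := by
  induction p using Polynomial.induction_on' with
  | add p q hp hq => rw [map_add, LinearMap.add_apply, hp, hq, eval_add, add_smul]
  | monomial n a =>
    rw [aeval_monomial, Module.End.mul_apply, pow_eigen_apply h, eval_monomial,
      Module.algebraMap_end_apply, smul_smul]

lemma pow_mem_apply {f : Module.End K V} {W : Submodule K V} (hW : ∀ x ∈ W, f x ∈ W)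
    (n : ℕ) {x : V} (hx : x ∈ W) : (f ^ n) x ∈ W := by
  induction n with
  | zero => simpa
  | succ n ih => rw [pow_succ', Module.End.mul_apply]; exact hW _ ih

lemma aeval_mem {f : Module.End K V} {W : Submodule K V} (hW : ∀ x ∈ W, f x ∈ W)
    (p : K[X]) {x : V} (hx : x ∈ W) : aeval f p x ∈ W := by
  induction p using Polynomial.induction_on' with
  | add p q hp hq => rw [map_add, LinearMap.add_apply]; exact W.add_mem hp hq
  | monomial n a =>
    rw [aeval_monomial, Module.End.mul_apply, Module.algebraMap_end_apply]
    exact W.smul_mem _ (pow_mem_apply hW n hx)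

lemma shift_pow_apply {M Y : Module.End K V} {c : K}
    (h : ∀ v, M (Y v) = Y (M v) + c • M v) (n : ℕ) (v : V) :
    M ((Y ^ n) v) = ((Y + c • 1) ^ n) (M v) := by
  induction n generalizing v with
  | zero => simp
  | succ n ih =>
    have e1 : ∀ w, (Y ^ (n+1)) w = (Y ^ n) (Y w) := fun w => by
      rw [pow_succ, Module.End.mul_apply]
    rw [e1, ih (Y v), h v, pow_succ, Module.End.mul_apply]
    congr 1

lemma shift_aeval_apply {M Y : Module.End K V} {c : K}
    (h : ∀ v, M (Y v) = Y (M v) + c • M v) (p : K[X]) (v : V) :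
    M (aeval Y p v) = aeval (Y + c • 1) p (M v) := by
  induction p using Polynomial.induction_on' with
  | add p q hp hq => rw [map_add, map_add, LinearMap.add_apply, LinearMap.add_apply,
      map_add, hp, hq]
  | monomial n a =>
    rw [aeval_monomial, aeval_monomial, Module.End.mul_apply, Module.End.mul_apply,
      Module.algebraMap_end_apply, Module.algebraMap_end_apply, map_smul,
      shift_pow_apply h]


lemma exists_pow_zero {Y A : Module.End K V} {c : K} (hc : c ≠ 0)
    (h : ∀ v, Y (A v) = A (Y v) + c • A v) : ∃ d : ℕ, A ^ d = 0 := by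
  by_contra hcon
  push_neg at hcon
  let adY : Module.End K (Module.End K V) :=
    LinearMap.mulLeft K Y - LinearMap.mulRight K Y
  have heig : ∀ j : ℕ, adY (A ^ j) = (c * j) • (A ^ j) := by
    intro j
    ext v
    have h2 := comm_pow_apply h j v
    show Y ((A ^ j) v) - (A ^ j) (Y v) = (c * (j:K)) • ((A ^ j) v)
    rw [h2]
    abel
  set D := Module.finrank K (Module.End K V)
  have hli : LinearIndependent K (fun i : Fin (D+1) => A ^ (i:ℕ)) := by
    apply Module.End.eigenvectors_linearIndependent' adY (fun i : Fin (D+1) => c * ((i:ℕ):K))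
    · intro i j hij
      have : ((i:ℕ):K) = ((j:ℕ):K) := mul_left_cancel₀ hc hij
      exact Fin.ext (Nat.cast_injective this)
    · intro i
      exact ⟨Module.End.mem_eigenspace_iff.2 (heig i), hcon i⟩
  have hcard := hli.fintype_card_le_finrank
  simp only [Fintype.card_fin] at hcard
  omega

lemma kerM_ann {M Y N : Module.End K V}
    (eYM : ∀ v, Y (M v) = M (Y v) + (2:K) • M v)
    (eYN : ∀ v, Y (N v) = N (Y v) + (-2:K) • N v)
    (eMN : ∀ v, M (N v) = N (M v) + Y v)
    {d : ℕ} (hd : N ^ d = 0)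
    {x : V} (hx : M x = 0) :
    aeval Y (∏ i ∈ Finset.range d, (X - C (i:K))) x = 0 := by
  have hkerY : ∀ w, M w = 0 → M (Y w) = 0 := by
    intro w hw
    have := eYM w
    rw [hw, map_zero] at this
    simpa using this.symm
  have hkerA : ∀ (p : K[X]) (w : V), M w = 0 → M (aeval Y p w) = 0 := by
    intro p w hw
    have : aeval Y p w ∈ LinearMap.ker M :=
      aeval_mem (W := LinearMap.ker M) (fun z hz => LinearMap.mem_ker.2 (hkerY z hz)) p
        (LinearMap.mem_ker.2 hw)
    exact LinearMap.mem_ker.1 this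
  suffices h : ∀ t j, j + t = d → ∀ w, M w = 0 →
      (N ^ j) (aeval Y (∏ i ∈ Finset.Ico j d, (X - C (i:K))) w) = 0 by
    have h9 := h d 0 (by omega) x hx
    rw [pow_zero, Module.End.one_apply, ← Finset.range_eq_Ico] at h9
    exact h9
  intro t
  induction t with
  | zero =>
    intro j hj w hw
    have : j = d := by omega
    subst this
    rw [Finset.Ico_self, Finset.prod_empty, map_one, Module.End.one_apply, hd]
    exact LinearMap.zero_apply w
  | succ t ih =>
    intro j hj w hw
    have hjd : j < d := by omega
    set q := ∏ i ∈ Finset.Ico (j+1) d, (X - C (i:K)) with hq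
    set y := aeval Y q w with hy
    have hMy : M y = 0 := hkerA q w hw
    have hstep : (N ^ (j+1)) y = 0 := ih (j+1) (by omega) w hw
    have h0 : M ((N ^ (j+1)) y) = 0 := by rw [hstep, map_zero]
    rw [M_pow_N_apply eMN eYN j y, hMy, map_zero, zero_add] at h0
    have h5 : ((j:K)+1) • ((N ^ j) (Y y) - (j:K) • (N ^ j) y) = 0 := by
      rw [smul_sub, smul_smul]; exact h0
    have h2 : (N ^ j) (Y y - (j:K) • y) = 0 := by
      rw [map_sub, map_smul]
      exact (smul_eq_zero.1 h5).resolve_left (Nat.cast_add_one_ne_zero j)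
    rw [Finset.prod_eq_prod_Ico_succ_bot hjd, map_mul, Module.End.mul_apply]
    have h3 : aeval Y (X - C (j:K)) (aeval Y q w) = Y y - (j:K) • y := by
      rw [map_sub, aeval_X, aeval_C, LinearMap.sub_apply, Module.algebraMap_end_apply]
    rw [h3]
    exact h2

lemma eig_decomp (f : Module.End K V) (s : Finset K) :
    ∀ x : V, aeval f (∏ c ∈ s, (X - C c)) x = 0 →
    ∃ y : K → V, (∀ c, ∃ p : K[X], y c = aeval f p x) ∧ (∀ c ∈ s, f (y c) = c • y c)
      ∧ x = ∑ c ∈ s, y c := by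
  classical
  induction s using Finset.induction_on with
  | empty =>
    intro x hx
    simp only [Finset.prod_empty, map_one, Module.End.one_apply] at hx
    exact ⟨fun _ => 0, fun c => ⟨0, by simp⟩, by simp, by simp [hx]⟩
  | @insert a s ha ih =>
    intro x hx
    rw [Finset.prod_insert ha] at hx
    have hcop : IsCoprime (∏ c ∈ s, (X - C c)) (X - C a) := by
      apply IsCoprime.prod_left
      intro c hc
      exact Polynomial.isCoprime_X_sub_C_of_isUnit_sub
        (isUnit_iff_ne_zero.2 (sub_ne_zero.2 (fun h => ha (h ▸ hc))))
    obtain ⟨p, q, hpq⟩ := hcop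
    set ya := aeval f (p * ∏ c ∈ s, (X - C c)) x with hya
    set x' := aeval f (q * (X - C a)) x with hx'
    have hsplit : x = ya + x' := by
      have h1 : aeval f (p * ∏ c ∈ s, (X - C c) + q * (X - C a)) x = x := by
        rw [hpq, map_one, Module.End.one_apply]
      rw [map_add, LinearMap.add_apply] at h1
      exact h1.symm
    have hyaeig : f ya = a • ya := by
      have h1 : aeval f (X - C a) ya = 0 := by
        rw [hya, ← Module.End.mul_apply, ← map_mul]
        have he : (X - C a) * (p * ∏ c ∈ s, (X - C c)) =
            p * ((X - C a) * ∏ c ∈ s, (X - C c)) := by ring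
        rw [he, map_mul, Module.End.mul_apply, hx, map_zero]
      have h2 : aeval f (X - C a) ya = f ya - a • ya := by
        rw [map_sub, aeval_X, aeval_C, LinearMap.sub_apply, Module.algebraMap_end_apply]
      rw [h2, sub_eq_zero] at h1
      exact h1
    have hx'ann : aeval f (∏ c ∈ s, (X - C c)) x' = 0 := by
      rw [hx', ← Module.End.mul_apply, ← map_mul]
      have he : (∏ c ∈ s, (X - C c)) * (q * (X - C a)) =
          q * ((X - C a) * ∏ c ∈ s, (X - C c)) := by ring
      rw [he, map_mul, Module.End.mul_apply, hx, map_zero]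
    obtain ⟨y', hy'p, hy'e, hy's⟩ := ih x' hx'ann
    refine ⟨Function.update y' a ya, ?_, ?_, ?_⟩
    · intro c
      by_cases hc : c = a
      · subst hc; rw [Function.update_self]; exact ⟨_, hya⟩
      · rw [Function.update_of_ne hc]
        obtain ⟨pc, hpc⟩ := hy'p c
        exact ⟨pc * (q * (X - C a)), by simp [hpc, hx', map_mul, Module.End.mul_apply]⟩
    · intro c hc
      rcases Finset.mem_insert.1 hc with h | h
      · subst h; rw [Function.update_self]; exact hyaeig
      · rw [Function.update_of_ne (ne_of_mem_of_not_mem h ha)]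
        exact hy'e c h
    · rw [Finset.sum_insert ha, Function.update_self]
      have hcong : ∑ c ∈ s, Function.update y' a ya c = ∑ c ∈ s, y' c :=
        Finset.sum_congr rfl fun c hc => Function.update_of_ne (ne_of_mem_of_not_mem hc ha) _ _
      rw [hcong, ← hy's]
      exact hsplit


lemma string_top {M Y N : Module.End K V}
    (eMN : ∀ v, M (N v) = N (M v) + Y v)
    (eYN : ∀ v, Y (N v) = N (Y v) + (-2:K) • N v)
    {d : ℕ} (hd : N ^ d = 0)
    {n : ℕ} {u : V} (hMu : M u = 0) (hYu : Y u = (n:K) • u) :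
    (N ^ (n+1)) u = 0 ∧ (u ≠ 0 → ∀ j ≤ n, (N ^ j) u ≠ 0) := by
  classical
  rcases eq_or_ne u 0 with rfl | hu
  · simp
  have hex : ∃ j, (N ^ j) u = 0 := ⟨d, by rw [hd]; exact LinearMap.zero_apply u⟩
  have h0 := Nat.find_spec hex
  have hpos : Nat.find hex ≠ 0 := fun h => hu (by simpa [h] using h0)
  obtain ⟨j', hj'⟩ : ∃ j', Nat.find hex = j' + 1 := ⟨Nat.find hex - 1, by omega⟩
  have hj'ne : (N ^ j') u ≠ 0 := Nat.find_min hex (by omega)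
  have hM0 : M ((N ^ (j'+1)) u) = 0 := by rw [← hj', h0, map_zero]
  rw [M_pow_N_apply eMN eYN j' u, hMu, map_zero, zero_add, hYu, map_smul] at hM0
  have hco : (((j':K)+1) * ((n:K) - (j':K))) • ((N ^ j') u) = 0 := by
    have he : (((j':K)+1) * ((n:K) - (j':K))) • ((N ^ j') u)
        = ((j':K)+1) • ((n:K) • (N ^ j') u) - (((j':K)+1)*(j':K)) • (N ^ j') u := by
      rw [smul_smul, ← sub_smul]
      congr 1
      ring
    rw [he]
    exact hM0
  have hcoeff : ((j':K)+1) * ((n:K) - (j':K)) = 0 :=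
    (smul_eq_zero.1 hco).resolve_right hj'ne
  have hnj : n = j' := by
    rcases mul_eq_zero.1 hcoeff with h | h
    · exact absurd h (Nat.cast_add_one_ne_zero j')
    · exact Nat.cast_inj.1 (sub_eq_zero.1 h)
  constructor
  · rw [hnj, ← hj']
    exact h0
  · intro _ j hj
    exact Nat.find_min hex (by omega)

lemma sum_range_lin (a : ℤ) (m : ℕ) :
    ∑ i ∈ Finset.range m, (a - 2*(i:ℤ)) = m * a - m * (m - 1) := by
  induction m with
  | zero => simp
  | succ m ih =>
    rw [Finset.sum_range_succ, ih]
    push_cast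
    ring

lemma core {M Y N : Module.End K V}
    (eYM : ∀ v, Y (M v) = M (Y v) + (2:K) • M v)
    (eYN : ∀ v, Y (N v) = N (Y v) + (-2:K) • N v)
    (eMN : ∀ v, M (N v) = N (M v) + Y v)
    {d : ℕ} (hd : N ^ d = 0)
    {n : ℕ} {u z : V} (hMu : M u = 0) (hYu : Y u = (n:K) • u)
    (hz : M z = (N ^ n) u) : u = 0 := by
  classical
  by_contra hu
  obtain ⟨hNtop, hNne'⟩ := string_top eMN eYN hd hMu hYu
  have hNne := hNne' hu
  have hNn : (N ^ n) u ≠ 0 := hNne n le_rfl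
  have hYNn : Y ((N ^ n) u) = (-(n:K)) • (N ^ n) u := by
    rw [comm_pow_apply eYN n u, hYu, map_smul, ← add_smul]
    congr 1
    ring
  set F := Y.charpoly with hF
  have hFann : aeval Y F = 0 := Y.aeval_self_charpoly
  have hFne : F ≠ 0 := Y.charpoly_monic.ne_zero
  set c : K := -(n:K) - 2 with hc
  have eMY : ∀ v, M (Y v) = Y (M v) + (-2:K) • M v := by
    intro v
    rw [eYM v]
    module
  have hshift : ∀ (p : K[X]) (v : V), M (aeval Y p v) = aeval (Y + (-2:K) • 1) p (M v) :=
    fun p v => shift_aeval_apply eMY p v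
  have hY2eig : (Y + (-2:K) • 1) ((N ^ n) u) = c • (N ^ n) u := by
    rw [LinearMap.add_apply, hYNn, LinearMap.smul_apply, Module.End.one_apply, ← add_smul, hc]
    congr 1
    ring
  by_cases hm0 : F.rootMultiplicity c = 0
  · have hroot : ¬ F.IsRoot c := by
      intro hr
      have := (Polynomial.rootMultiplicity_pos hFne).2 hr
      omega
    have h1 : (0:V) = F.eval c • (N ^ n) u := by
      have h2 : M (aeval Y F z) = aeval (Y + (-2:K) • 1) F (M z) := hshift F z
      rw [hFann, LinearMap.zero_apply, map_zero] at h2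
      rw [hz, aeval_eigen_apply hY2eig] at h2
      exact h2
    refine hNn ?_
    have h3 := h1.symm
    rw [smul_eq_zero] at h3
    exact h3.resolve_left hroot
  · obtain ⟨H, hFH, hHnd⟩ := F.exists_eq_pow_rootMultiplicity_mul_and_not_dvd hFne c
    set m := F.rootMultiplicity c with hm
    have hHev : H.eval c ≠ 0 := fun h => hHnd (Polynomial.dvd_iff_isRoot.2 h)
    have hCe : C (H.eval c)⁻¹ * C (H.eval c) = 1 := by
      rw [← C_mul, inv_mul_cancel₀ hHev, map_one]
    have hcp1 : IsCoprime (X - C c) H := by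
      obtain ⟨g, hg⟩ : (X - C c) ∣ (H - C (H.eval c)) :=
        Polynomial.dvd_iff_isRoot.2 (by simp)
      exact ⟨-(C (H.eval c)⁻¹) * g, C (H.eval c)⁻¹,
        by linear_combination C (H.eval c)⁻¹ * hg + hCe⟩
    have hcp : IsCoprime ((X - C c) ^ m) H := hcp1.pow_left
    obtain ⟨a, b, hab⟩ := hcp
    set z₀ := aeval Y (b * H) z with hz₀
    have hz₀pow : aeval Y ((X - C c) ^ m) z₀ = 0 := by
      rw [hz₀, ← Module.End.mul_apply, ← map_mul]
      have he : (X - C c) ^ m * (b * H) = b * F := by rw [hFH]; ring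
      rw [he, map_mul, Module.End.mul_apply, hFann, LinearMap.zero_apply, map_zero]
    have hbH1 : (b * H).eval c = 1 := by
      have h4 := congrArg (Polynomial.eval c) hab
      simp only [Polynomial.eval_add, Polynomial.eval_mul, Polynomial.eval_pow,
        Polynomial.eval_sub, Polynomial.eval_X, Polynomial.eval_C, Polynomial.eval_one,
        sub_self, zero_pow hm0, mul_zero, zero_add] at h4
      rw [Polynomial.eval_mul]
      exact h4
    have hMz₀ : M z₀ = (N ^ n) u := by
      rw [hz₀, hshift, hz, aeval_eigen_apply hY2eig, hbH1, one_smul]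
    have hz₀ne : z₀ ≠ 0 := fun h => hNn (by rw [← hMz₀, h, map_zero])
    set z' := Y z₀ - c • z₀ with hz'
    have hz'aeval : z' = aeval Y (X - C c) z₀ := by
      rw [map_sub, aeval_X, aeval_C, LinearMap.sub_apply, Module.algebraMap_end_apply, hz']
    have hMz' : M z' = 0 := by
      rw [hz', map_sub, map_smul, eMY z₀, hMz₀, hYNn, hc]
      module
    have hz'pow : aeval Y ((X - C c) ^ (m-1)) z' = 0 := by
      rw [hz'aeval, ← Module.End.mul_apply, ← map_mul]
      have he : (X - C c)^(m-1) * (X - C c) = (X - C c)^m := by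
        rw [← pow_succ]
        congr 1
        omega
      rw [he]
      exact hz₀pow
    have hz'ann : aeval Y (∏ i ∈ Finset.range d, (X - C (i:K))) z' = 0 :=
      kerM_ann eYM eYN eMN hd hMz'
    have hcp2 : IsCoprime ((X - C c) ^ (m-1)) (∏ i ∈ Finset.range d, (X - C (i:K))) := by
      apply IsCoprime.pow_left
      apply IsCoprime.prod_right
      intro i hi
      apply Polynomial.isCoprime_X_sub_C_of_isUnit_sub
      apply isUnit_iff_ne_zero.2
      rw [hc]
      intro hcc
      have h5 : ((n + 2 + i : ℕ) : K) = 0 := by push_cast; linear_combination -hcc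
      exact (Nat.cast_ne_zero.2 (by omega)) h5
    obtain ⟨aa, bb, habb⟩ := hcp2
    have hz'0 : z' = 0 := by
      have h5 : aeval Y (aa * (X - C c)^(m-1)
          + bb * ∏ i ∈ Finset.range d, (X - C (i:K))) z' = z' := by
        rw [habb, map_one, Module.End.one_apply]
      rw [map_add, LinearMap.add_apply, map_mul, map_mul, Module.End.mul_apply,
        Module.End.mul_apply, hz'pow, hz'ann, map_zero, map_zero, add_zero] at h5
      exact h5.symm
    have hYz₀ : Y z₀ = c • z₀ := sub_eq_zero.1 (hz' ▸ hz'0)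
    -- trace contradiction
    have hex : ∃ i, (N ^ i) z₀ = 0 := ⟨d, by rw [hd]; exact LinearMap.zero_apply z₀⟩
    set i₀ := Nat.find hex with hi₀def
    have hi₀spec : (N ^ i₀) z₀ = 0 := by rw [hi₀def]; exact Nat.find_spec hex
    have hi₀min : ∀ m', m' < i₀ → (N ^ m') z₀ ≠ 0 := fun m' hm' =>
      Nat.find_min hex (hi₀def ▸ hm')
    have hi₀pos : 1 ≤ i₀ := by
      rcases Nat.eq_zero_or_pos i₀ with h | h
      · exact absurd (by simpa [h] using hi₀spec) hz₀ne
      · exact h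
    set wt : (Fin i₀ ⊕ Fin (n+1)) → ℤ :=
      Sum.elim (fun i => -((n:ℤ)+2) - 2*((i:ℕ):ℤ)) (fun j => (n:ℤ) - 2*((j:ℕ):ℤ)) with hwt
    set fam : (Fin i₀ ⊕ Fin (n+1)) → V :=
      Sum.elim (fun i => (N^((i:ℕ))) z₀) (fun j => (N^((j:ℕ))) u) with hfam
    have hfam_eig : ∀ t, Y (fam t) = ((wt t : ℤ) : K) • fam t := by
      rintro (i | j)
      · show Y ((N^((i:ℕ))) z₀) = ((-((n:ℤ)+2) - 2*((i:ℕ):ℤ) : ℤ) : K) • ((N^((i:ℕ))) z₀)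
        rw [comm_pow_apply eYN _ z₀, hYz₀, map_smul, ← add_smul]
        congr 1
        rw [hc]
        push_cast
        ring
      · show Y ((N^((j:ℕ))) u) = (((n:ℤ) - 2*((j:ℕ):ℤ) : ℤ) : K) • ((N^((j:ℕ))) u)
        rw [comm_pow_apply eYN _ u, hYu, map_smul, ← add_smul]
        congr 1
        push_cast
        ring
    have hfam_ne : ∀ t, fam t ≠ 0 := by
      rintro (i | j)
      · exact hi₀min _ i.2
      · exact hNne _ (by omega)
    have hμinj : Function.Injective (fun t : Fin i₀ ⊕ Fin (n+1) => ((wt t : ℤ) : K)) := by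
      intro t t' h
      have h2 : wt t = wt t' := by
        have h' : ((wt t : ℤ):K) = ((wt t' : ℤ):K) := h
        exact_mod_cast h'
      rcases t with i | j <;> rcases t' with i' | j'
      · have h3 : -((n:ℤ)+2) - 2*((i:ℕ):ℤ) = -((n:ℤ)+2) - 2*((i':ℕ):ℤ) := h2
        exact congrArg Sum.inl (Fin.ext (by omega))
      · exfalso
        have h3 : -((n:ℤ)+2) - 2*((i:ℕ):ℤ) = (n:ℤ) - 2*((j':ℕ):ℤ) := h2
        have hj' : (j':ℕ) < n+1 := j'.isLt
        omega
      · exfalso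
        have h3 : (n:ℤ) - 2*((j:ℕ):ℤ) = -((n:ℤ)+2) - 2*((i':ℕ):ℤ) := h2
        have hj : (j:ℕ) < n+1 := j.isLt
        omega
      · have h3 : (n:ℤ) - 2*((j:ℕ):ℤ) = (n:ℤ) - 2*((j':ℕ):ℤ) := h2
        exact congrArg Sum.inr (Fin.ext (by omega))
    have hli : LinearIndependent K fam :=
      Module.End.eigenvectors_linearIndependent' Y (fun t => ((wt t : ℤ) : K)) hμinj fam
        (fun t => ⟨Module.End.mem_eigenspace_iff.2 (hfam_eig t), hfam_ne t⟩)
    set W := Submodule.span K (Set.range fam) with hW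
    have hmemW : ∀ t, fam t ∈ W := fun t => Submodule.subset_span ⟨t, rfl⟩
    have hNgen : ∀ t, N (fam t) ∈ W := by
      rintro (i | j)
      · show N ((N^((i:ℕ))) z₀) ∈ W
        have he : N ((N^((i:ℕ))) z₀) = (N^((i:ℕ)+1)) z₀ := by
          rw [pow_succ', Module.End.mul_apply]
        rw [he]
        by_cases hlt : (i:ℕ)+1 < i₀
        · exact hmemW (Sum.inl ⟨(i:ℕ)+1, hlt⟩)
        · have h6 : (i:ℕ)+1 = i₀ := by have := i.2; omega
          rw [h6, hi₀spec]
          exact W.zero_mem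
      · show N ((N^((j:ℕ))) u) ∈ W
        have he : N ((N^((j:ℕ))) u) = (N^((j:ℕ)+1)) u := by
          rw [pow_succ', Module.End.mul_apply]
        rw [he]
        by_cases hlt : (j:ℕ)+1 < n+1
        · exact hmemW (Sum.inr ⟨(j:ℕ)+1, hlt⟩)
        · have h6 : (j:ℕ)+1 = n+1 := by have := j.isLt; omega
          rw [h6, hNtop]
          exact W.zero_mem
    have hYgen : ∀ t, Y (fam t) ∈ W := fun t => by
      rw [hfam_eig t]
      exact W.smul_mem _ (hmemW t)
    have hMgen : ∀ t, M (fam t) ∈ W := by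
      rintro (i | j)
      · show M ((N^((i:ℕ))) z₀) ∈ W
        by_cases hi : (i:ℕ) = 0
        · rw [hi, pow_zero, Module.End.one_apply, hMz₀]
          exact hmemW (Sum.inr ⟨n, n.lt_succ_self⟩)
        · obtain ⟨i', hi'⟩ : ∃ i', (i:ℕ) = i' + 1 := ⟨(i:ℕ)-1, by omega⟩
          have hi'lt : i' < i₀ := by have := i.2; omega
          rw [hi', M_pow_N_apply eMN eYN i' z₀, hMz₀, hYz₀, map_smul]
          have h7 : (N^(i'+1)) ((N^n) u) = (N^(i')) ((N^(n+1)) u) := by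
            rw [← Module.End.mul_apply, ← Module.End.mul_apply, ← pow_add, ← pow_add]
            congr 2
            omega
          rw [h7, hNtop, map_zero, zero_add]
          apply Submodule.sub_mem
          · exact W.smul_mem _ (W.smul_mem _ (hmemW (Sum.inl ⟨i', hi'lt⟩)))
          · exact W.smul_mem _ (hmemW (Sum.inl ⟨i', hi'lt⟩))
      · show M ((N^((j:ℕ))) u) ∈ W
        by_cases hj : (j:ℕ) = 0
        · rw [hj, pow_zero, Module.End.one_apply, hMu]
          exact W.zero_mem
        · obtain ⟨j', hj'⟩ : ∃ j', (j:ℕ) = j' + 1 := ⟨(j:ℕ)-1, by omega⟩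
          have hj'lt : j' < n+1 := by have := j.isLt; omega
          rw [hj', M_pow_N_apply eMN eYN j' u, hMu, map_zero, zero_add, hYu, map_smul]
          apply Submodule.sub_mem
          · exact W.smul_mem _ (W.smul_mem _ (hmemW (Sum.inr ⟨j', hj'lt⟩)))
          · exact W.smul_mem _ (hmemW (Sum.inr ⟨j', hj'lt⟩))
    have hinv : ∀ (f : Module.End K V), (∀ t, f (fam t) ∈ W) → ∀ x ∈ W, f x ∈ W := by
      intro f hf x hx
      have h1 : Submodule.map f W ≤ W := by
        rw [hW, Submodule.map_span, Submodule.span_le]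
        rintro y ⟨y', ⟨t, rfl⟩, rfl⟩
        exact hf t
      exact h1 ⟨x, hx, rfl⟩
    set Mr := M.restrict (hinv M hMgen) with hMr
    set Nr := N.restrict (hinv N hNgen) with hNr
    set Yr := Y.restrict (hinv Y hYgen) with hYr
    have hYrc : Yr = Mr * Nr - Nr * Mr := by
      ext x
      show Y (x:V) = ((Mr * Nr - Nr * Mr) x : V)
      have h8 : ((Mr * Nr - Nr * Mr) x : V) = M (N (x:V)) - N (M (x:V)) := rfl
      rw [h8, eMN]
      abel
    have htr0 : LinearMap.trace K W Yr = 0 := by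
      rw [hYrc, map_sub, LinearMap.trace_mul_comm, sub_self]
    set bW := Basis.span hli with hbW
    have hbWc : ∀ t, (bW t : V) = fam t := fun t => congrArg Subtype.val (Basis.span_apply hli t)
    have hYrb : ∀ t, Yr (bW t) = ((wt t : ℤ):K) • bW t := by
      intro t
      refine Subtype.ext ?_
      show Y ((bW t : V)) = (((((wt t : ℤ):K)) • bW t : W) : V)
      rw [Submodule.coe_smul, hbWc, hfam_eig t]
    have htr : LinearMap.trace K W Yr = ∑ t, ((wt t : ℤ):K) := by
      rw [LinearMap.trace_eq_matrix_trace K bW, Matrix.trace]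
      apply Finset.sum_congr rfl
      intro t _
      rw [Matrix.diag_apply, LinearMap.toMatrix_apply, hYrb t, map_smul, Basis.repr_self]
      simp
    have hsumK : (∑ t, ((wt t : ℤ):K)) = 0 := by rw [← htr, htr0]
    have hsumZ : (∑ t, wt t) = 0 := by
      have h9 : ((∑ t, wt t : ℤ) : K) = 0 := by
        push_cast
        exact hsumK
      exact_mod_cast h9
    rw [Fintype.sum_sum_type] at hsumZ
    have hA : ∑ i : Fin i₀, wt (Sum.inl i) = ∑ i : Fin i₀, (-((n:ℤ)+2) - 2*((i:ℕ):ℤ)) :=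
      Finset.sum_congr rfl (fun i _ => rfl)
    have hB : ∑ j : Fin (n+1), wt (Sum.inr j) = ∑ j : Fin (n+1), ((n:ℤ) - 2*((j:ℕ):ℤ)) :=
      Finset.sum_congr rfl (fun j _ => rfl)
    have h01 : ∑ j : Fin (n+1), ((n:ℤ) - 2*((j:ℕ):ℤ)) = 0 := by
      rw [Fin.sum_univ_eq_sum_range (fun i => (n:ℤ) - 2*(i:ℤ)) (n+1), sum_range_lin]
      push_cast
      ring
    have h02 : ∑ i : Fin i₀, (-((n:ℤ)+2) - 2*((i:ℕ):ℤ))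
        = i₀*(-((n:ℤ)+2)) - i₀*((i₀:ℤ)-1) := by
      rw [Fin.sum_univ_eq_sum_range (fun i => -((n:ℤ)+2) - 2*(i:ℤ)) i₀, sum_range_lin]
    rw [hA, hB, h01, h02, add_zero] at hsumZ
    have hn0 : (0:ℤ) ≤ (n:ℤ) := Int.natCast_nonneg n
    have hi₀Z : (1:ℤ) ≤ (i₀:ℤ) := by exact_mod_cast hi₀pos
    nlinarith [hsumZ, hn0, hi₀Z,
      mul_nonneg (by linarith : (0:ℤ) ≤ (i₀:ℤ)) (by linarith : (0:ℤ) ≤ (i₀:ℤ)-1)]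


lemma finrank_perp {Q : V →ₗ[K] Module.Dual K V} (hinj : Function.Injective Q)
    (S : Submodule K V) :
    Module.finrank K (S.dualAnnihilator.comap Q) + Module.finrank K S
      = Module.finrank K V := by
  have hsurj : Function.Surjective Q :=
    (LinearMap.injective_iff_surjective_of_finrank_eq_finrank
      (Subspace.dual_finrank_eq (K := K) (V := V)).symm).1 hinj
  let e : V ≃ₗ[K] Module.Dual K V := LinearEquiv.ofBijective Q ⟨hinj, hsurj⟩
  have h1 : Module.finrank K (S.dualAnnihilator.comap Q)
      = Module.finrank K S.dualAnnihilator :=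
    LinearEquiv.finrank_eq (LinearEquiv.ofSubmodule' e S.dualAnnihilator)
  rw [h1]
  have h2 : Module.finrank K S.dualAnnihilator = Module.finrank K (V ⧸ S) :=
    (LinearEquiv.finrank_eq (Subspace.quotEquivAnnihilator S)).symm
  rw [h2, Submodule.finrank_quotient_add_finrank]

end MultParityAux

open MultParityAux

/-- **Multiplicity parity.**
Let `Q` be a nondegenerate `(-1)^k`-symmetric bilinear form on a finite-dimensional vector
space `V` over a field of characteristic zero, and let `N` be the nilnegative element of a
standard triple `{M,Y,N}` of `Q`-skew endomorphisms.  If `k + ℓ` is odd, then the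
multiplicity `m_ℓ` of the `(ℓ+1)`-dimensional irreducible `sl₂`-module in `V` — namely the
dimension of the highest weight space `P(ℓ) = ker M ∩ {Y = ℓ}` — is even. -/
theorem multiplicity_even_of_odd_weight
    (K : Type*) [Field K] [CharZero K]
    (V : Type*) [AddCommGroup V] [Module K V] [FiniteDimensional K V]
    (k : ℕ) (Q : V →ₗ[K] V →ₗ[K] K)
    (hnondeg : ∀ u : V, (∀ v : V, Q u v = 0) → u = 0)
    (hsymm : ∀ u v : V, Q u v = (-1 : K) ^ k * Q v u)
    (M Y N : Module.End K V)
    (hMskew : ∀ u v : V, Q (M u) v = -Q u (M v))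
    (hYskew : ∀ u v : V, Q (Y u) v = -Q u (Y v))
    (hNskew : ∀ u v : V, Q (N u) v = -Q u (N v))
    (h1 : ⁅Y, M⁆ = (2 : K) • M)
    (h2 : ⁅Y, N⁆ = -((2 : K) • N))
    (h3 : ⁅M, N⁆ = Y)
    (ℓ : ℕ) (hodd : Odd (k + ℓ)) :
    Even (Module.finrank K
      ↥(LinearMap.ker M ⊓ Module.End.eigenspace Y (ℓ : K))) := by
  classical
  -- pointwise commutation relations
  have eYM : ∀ v, Y (M v) = M (Y v) + (2:K) • M v := by
    intro v
    have e1 : Y * M - M * Y = (2:K) • M := by rw [← Ring.lie_def]; exact h1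
    have h := congrArg (fun f : Module.End K V => f v) e1
    simp only [LinearMap.sub_apply, Module.End.mul_apply, LinearMap.smul_apply] at h
    rw [sub_eq_iff_eq_add] at h
    rw [h, add_comm]
  have eYN : ∀ v, Y (N v) = N (Y v) + (-2:K) • N v := by
    intro v
    have e1 : Y * N - N * Y = -((2:K) • N) := by rw [← Ring.lie_def]; exact h2
    have h := congrArg (fun f : Module.End K V => f v) e1
    simp only [LinearMap.sub_apply, Module.End.mul_apply, LinearMap.smul_apply,
      LinearMap.neg_apply] at h
    rw [sub_eq_iff_eq_add] at h
    rw [h]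
    module
  have eMN : ∀ v, M (N v) = N (M v) + Y v := by
    intro v
    have e1 : M * N - N * M = Y := by rw [← Ring.lie_def]; exact h3
    have h := congrArg (fun f : Module.End K V => f v) e1
    simp only [LinearMap.sub_apply, Module.End.mul_apply] at h
    rw [sub_eq_iff_eq_add] at h
    rw [h, add_comm]
  -- nilpotency of N and M
  obtain ⟨d, hd⟩ := exists_pow_zero (Y := Y) (A := N) (c := (-2:K)) (by norm_num) eYN
  obtain ⟨dM, hdM⟩ := exists_pow_zero (Y := Y) (A := M) (c := (2:K)) (by norm_num) eYM
  -- ker M is Y-invariant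
  have hkerY : ∀ w, M w = 0 → M (Y w) = 0 := by
    intro w hw
    have h := eYM w
    rw [hw, map_zero] at h
    have := h.symm
    simpa using this
  have hkeraeval : ∀ (p : Polynomial K) (w : V), M w = 0 → M (Polynomial.aeval Y p w) = 0 := by
    intro p w hw
    have : Polynomial.aeval Y p w ∈ LinearMap.ker M :=
      aeval_mem (W := LinearMap.ker M)
        (fun z hz => LinearMap.mem_ker.2 (hkerY z (LinearMap.mem_ker.1 hz))) p
        (LinearMap.mem_ker.2 hw)
    exact LinearMap.mem_ker.1 this
  -- Q as a map into the dual
  have hQinj : Function.Injective (Q : V →ₗ[K] Module.Dual K V) := by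
    rw [← LinearMap.ker_eq_bot, Submodule.eq_bot_iff]
    intro u hu
    apply hnondeg
    intro v
    have h5 : Q u = (0 : Module.Dual K V) := hu
    rw [h5]
    rfl
  -- moving powers of N across Q
  have hflip : ∀ (j:ℕ) (x y : V), Q x ((N^j) y) = ((-1:K)^j) * Q ((N^j) x) y := by
    intro j
    induction j with
    | zero => intro x y; simp
    | succ j ih =>
      intro x y
      have hsucc : ∀ w:V, (N^(j+1)) w = (N^j) (N w) := fun w => by
        rw [pow_succ, Module.End.mul_apply]
      have hsucc' : ∀ w:V, (N^(j+1)) w = N ((N^j) w) := fun w => by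
        rw [pow_succ', Module.End.mul_apply]
      rw [hsucc y, ih x (N y)]
      have h9 : Q ((N^j) x) (N y) = -Q (N ((N^j) x)) y := by
        linear_combination hNskew ((N^j) x) y
      rw [h9, ← hsucc' x]
      ring
  -- perp of ker M is range M
  have hperpker : (LinearMap.ker M).dualAnnihilator.comap Q = LinearMap.range M := by
    symm
    apply Submodule.eq_of_le_of_finrank_le
    · rintro _ ⟨w, rfl⟩
      simp only [Submodule.mem_comap, Submodule.mem_dualAnnihilator]
      intro x hx
      have hx0 : M x = 0 := LinearMap.mem_ker.1 hx
      show Q (M w) x = 0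
      rw [hMskew w x, hx0, map_zero, neg_zero]
    · have hA := finrank_perp hQinj (LinearMap.ker M)
      have hB := LinearMap.finrank_range_add_finrank_ker M
      omega
  -- the spanning submodule A
  set A : Submodule K V := ⨆ j : Fin d, (LinearMap.ker M).map (N ^ (j:ℕ)) with hA
  have hmemA : ∀ (j : Fin d) (x : V), M x = 0 → (N^(j:ℕ)) x ∈ A := by
    intro j x hx
    apply Submodule.mem_iSup_of_mem j
    exact ⟨x, LinearMap.mem_ker.2 hx, rfl⟩
  -- eigendecomposition setup
  set sF : Finset K := (Finset.range d).image (fun i : ℕ => (i:K)) with hsF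
  have hprod : (∏ c ∈ sF, (Polynomial.X - Polynomial.C c))
      = ∏ i ∈ Finset.range d, (Polynomial.X - Polynomial.C (i:K)) := by
    rw [hsF, Finset.prod_image]
    intro i _ j _ hij
    exact Nat.cast_injective hij
  -- the perp of A, explicitly
  have hBiff : ∀ u : V, u ∈ A.dualAnnihilator.comap Q ↔
      ∀ j : ℕ, (N^j) u ∈ LinearMap.range M := by
    intro u
    constructor
    · intro hu j
      by_cases hj : j < d
      · rw [← hperpker]
        simp only [Submodule.mem_comap, Submodule.mem_dualAnnihilator]
        intro x hx
        have hx0 : M x = 0 := LinearMap.mem_ker.1 hx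
        have h5 : Q u ((N^j) x) = 0 := by
          have h6 := Submodule.mem_comap.1 hu
          rw [Submodule.mem_dualAnnihilator] at h6
          exact h6 _ (hmemA ⟨j, hj⟩ x hx0)
        have h6 := hflip j u x
        rw [h5] at h6
        have h7 : ((-1:K)^j) ≠ 0 := pow_ne_zero _ (by norm_num)
        show Q ((N^j) u) x = 0
        exact (mul_eq_zero.1 h6.symm).resolve_left h7
      · have h5 : (N^j) u = 0 := by
          have he : N^j = N^(j-d) * N^d := by rw [← pow_add]; congr 1; omega
          rw [he, Module.End.mul_apply, hd, LinearMap.zero_apply, map_zero]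
        rw [h5]
        exact Submodule.zero_mem _
    · intro hu
      simp only [Submodule.mem_comap, Submodule.mem_dualAnnihilator]
      intro w hw
      have hle : A ≤ LinearMap.ker (Q u) := by
        rw [hA]
        apply iSup_le
        intro j
        rw [Submodule.map_le_iff_le_comap]
        intro x hx
        have hx0 : M x = 0 := LinearMap.mem_ker.1 hx
        simp only [Submodule.mem_comap, LinearMap.mem_ker]
        obtain ⟨w', hw'⟩ := hu (j:ℕ)
        rw [hflip (j:ℕ) u x, ← hw']
        have h8 : Q (M w') x = 0 := by
          rw [hMskew w' x, hx0, map_zero, neg_zero]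
        rw [h8, mul_zero]
      exact LinearMap.mem_ker.1 (hle hw)
  -- the perp submodule B
  set Binf : Submodule K V := ⨅ j : ℕ, (LinearMap.range M).comap (N^j) with hBinfd
  have hBinfmem : ∀ u : V, u ∈ Binf ↔ ∀ j : ℕ, (N^j) u ∈ LinearMap.range M := by
    intro u
    simp [hBinfd, Submodule.mem_iInf, Submodule.mem_comap]
  have hrangeY : ∀ w : V, w ∈ LinearMap.range M → Y w ∈ LinearMap.range M := by
    rintro _ ⟨w', rfl⟩
    exact ⟨Y w' + (2:K) • w', by rw [map_add, map_smul]; exact (eYM w').symm⟩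
  have hBY : ∀ u ∈ Binf, Y u ∈ Binf := by
    intro u hu
    rw [hBinfmem] at hu ⊢
    intro j
    have h9 := comm_pow_apply eYN j u
    have h10 : (N^j) (Y u) = Y ((N^j) u) + ((2:K)*j) • (N^j) u := by
      rw [h9]
      module
    rw [h10]
    exact Submodule.add_mem _ (hrangeY _ (hu j)) (Submodule.smul_mem _ _ (hu j))
  have hBM : ∀ u ∈ Binf, M u ∈ Binf := by
    intro u hu
    rw [hBinfmem] at hu ⊢
    intro j
    cases j with
    | zero =>
      simp only [pow_zero, Module.End.one_apply]
      exact ⟨u, rfl⟩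
    | succ j' =>
      have h9 := M_pow_N_apply eMN eYN j' u
      have h10 : (N^(j'+1)) (M u) = M ((N^(j'+1)) u) - (((j':K)+1) • (N^(j')) (Y u)
          - (((j':K)+1)*(j':K)) • (N^(j')) u) := by
        rw [h9]
        abel
      rw [h10]
      apply Submodule.sub_mem
      · exact ⟨_, rfl⟩
      · apply Submodule.sub_mem
        · exact Submodule.smul_mem _ _ ((hBinfmem _).1 (hBY u ((hBinfmem u).2 hu)) j')
        · exact Submodule.smul_mem _ _ (hu j')
  -- B = ⊥
  have hBbot : A.dualAnnihilator.comap Q = ⊥ := by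
    rw [Submodule.eq_bot_iff]
    intro b hb
    by_contra hbne
    have hbB : b ∈ Binf := (hBinfmem b).2 ((hBiff b).1 hb)
    have hpowB : ∀ s, (M^s) b ∈ Binf := by
      intro s
      induction s with
      | zero => simpa using hbB
      | succ s ih =>
        rw [pow_succ', Module.End.mul_apply]
        exact hBM _ ih
    have hexM : ∃ s, (M^s) b = 0 := ⟨dM, by rw [hdM]; exact LinearMap.zero_apply b⟩
    have hfind := Nat.find_spec hexM
    have hfpos : Nat.find hexM ≠ 0 := by
      intro h
      apply hbne
      rw [h] at hfind
      simpa using hfind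
    obtain ⟨s', hs'⟩ : ∃ s', Nat.find hexM = s' + 1 := ⟨Nat.find hexM - 1, by omega⟩
    set u₀ := (M^s') b with hu₀
    have hu₀ne : u₀ ≠ 0 := Nat.find_min hexM (by omega)
    have hMu₀ : M u₀ = 0 := by
      rw [hu₀, ← Module.End.mul_apply, ← pow_succ', ← hs']
      exact hfind
    have hu₀B : u₀ ∈ Binf := hpowB s'
    have hann := kerM_ann eYM eYN eMN hd hMu₀
    obtain ⟨y, hyp, hye, hysum⟩ := eig_decomp Y sF u₀ (by rw [hprod]; exact hann)
    have hyne : ∃ c ∈ sF, y c ≠ 0 := by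
      by_contra hall
      push_neg at hall
      exact hu₀ne (by rw [hysum]; exact Finset.sum_eq_zero hall)
    obtain ⟨cc, hccs, hycc⟩ := hyne
    obtain ⟨i, hi, hci⟩ := Finset.mem_image.1 (hsF ▸ hccs)
    obtain ⟨py, hpy⟩ := hyp cc
    have hMycc : M (y cc) = 0 := by rw [hpy]; exact hkeraeval py u₀ hMu₀
    have hBycc : y cc ∈ Binf := by
      rw [hpy]
      exact aeval_mem (W := Binf) hBY py hu₀B
    have hYycc : Y (y cc) = (i:K) • y cc := by
      rw [hci]
      exact hye cc hccs
    obtain ⟨zz, hzz⟩ := (hBinfmem _).1 hBycc i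
    exact hycc (core eYM eYN eMN hd hMycc hYycc hzz)
  -- A = ⊤
  have hAtop : A = ⊤ := by
    have h1 := finrank_perp hQinj A
    rw [hBbot] at h1
    rw [finrank_bot] at h1
    exact Submodule.eq_top_of_finrank_eq (by omega)
  -- the highest weight space
  set P : Submodule K V := LinearMap.ker M ⊓ Module.End.eigenspace Y (ℓ:K) with hP
  -- key nondegeneracy
  have hkey : ∀ u : V, M u = 0 → Y u = (ℓ:K) • u →
      (∀ v ∈ P, Q u ((N^ℓ) v) = 0) → u = 0 := by
    intro u hMu hYu hQu
    apply hnondeg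
    intro v
    have hv : v ∈ A := hAtop ▸ Submodule.mem_top
    have hle : A ≤ LinearMap.ker (Q u) := by
      rw [hA]
      apply iSup_le
      intro j
      rw [Submodule.map_le_iff_le_comap]
      intro x hx
      have hx0 : M x = 0 := LinearMap.mem_ker.1 hx
      simp only [Submodule.mem_comap, LinearMap.mem_ker]
      have hann := kerM_ann eYM eYN eMN hd hx0
      obtain ⟨y, hyp, hye, hysum⟩ := eig_decomp Y sF x (by rw [hprod]; exact hann)
      rw [hysum, map_sum, map_sum]
      apply Finset.sum_eq_zero
      intro cc hccs
      obtain ⟨i, hi, hci⟩ := Finset.mem_image.1 (hsF ▸ hccs)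
      obtain ⟨py, hpy⟩ := hyp cc
      have hMy : M (y cc) = 0 := by rw [hpy]; exact hkeraeval py x hx0
      have hYy : Y (y cc) = (i:K) • y cc := by
        rw [hci]
        exact hye cc hccs
      have hQM : ∀ w : V, Q u (M w) = 0 := by
        intro w
        have h5 := hMskew u w
        rw [hMu, map_zero, LinearMap.zero_apply] at h5
        linear_combination h5
      rcases lt_trichotomy (j:ℕ) i with hji | hji | hji
      · -- (j:ℕ) < i
        have h9 := M_pow_N_apply eMN eYN (j:ℕ) (y cc)
        rw [hMy, map_zero, zero_add, hYy, map_smul] at h9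
        have hco : M ((N^((j:ℕ)+1)) (y cc))
            = ((((j:ℕ):K)+1) * ((i:K) - ((j:ℕ):K))) • (N^(j:ℕ)) (y cc) := by
          rw [h9, smul_smul, ← sub_smul]
          congr 1
          ring
        have hcne : ((((j:ℕ):K)+1) * ((i:K) - ((j:ℕ):K))) ≠ 0 := by
          apply mul_ne_zero (Nat.cast_add_one_ne_zero (j:ℕ))
          have : ((i - (j:ℕ) : ℕ) : K) ≠ 0 := Nat.cast_ne_zero.2 (by omega)
          intro hcc0
          apply this
          push_cast [Nat.cast_sub (le_of_lt hji)]
          linear_combination hcc0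
        have h11 : (N^(j:ℕ)) (y cc)
            = ((((j:ℕ):K)+1) * ((i:K) - ((j:ℕ):K)))⁻¹ • M ((N^((j:ℕ)+1)) (y cc)) := by
          rw [hco, smul_smul, inv_mul_cancel₀ hcne, one_smul]
        rw [h11, map_smul]
        rw [hQM]
        simp
      · -- (j:ℕ) = i
        by_cases hil : i = ℓ
        · have hyP : y cc ∈ P := by
            rw [hP, Submodule.mem_inf]
            exact ⟨LinearMap.mem_ker.2 hMy,
              Module.End.mem_eigenspace_iff.2 (by rw [hYy, hil])⟩
          have := hQu (y cc) hyP
          rw [hji, hil]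
          exact this
        · -- weight argument
          set w := (N^(j:ℕ)) (y cc) with hw
          have hYw : Y w = (-(i:K)) • w := by
            rw [hw, comm_pow_apply eYN (j:ℕ) (y cc), hYy, map_smul, ← add_smul, hji]
            congr 1
            ring
          have e5 : Q u (Y w) = -(ℓ:K) * Q u w := by
            have h5 := hYskew u w
            rw [hYu, map_smul, LinearMap.smul_apply, smul_eq_mul] at h5
            linear_combination h5
          have e6 : Q u (Y w) = -(i:K) * Q u w := by
            rw [hYw, map_smul, smul_eq_mul]
          have e7 : ((i:K) - (ℓ:K)) * Q u w = 0 := by linear_combination e6 - e5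
          have e8 : (i:K) - (ℓ:K) ≠ 0 := by
            intro h0
            have h9 : ((i:ℕ):K) = ((ℓ:ℕ):K) := by linear_combination h0
            exact hil (Nat.cast_injective h9)
          exact (mul_eq_zero.1 e7).resolve_left e8
      · -- (j:ℕ) > i
        have htop := (string_top eMN eYN hd hMy hYy).1
        have h5 : (N^(j:ℕ)) (y cc) = (N^((j:ℕ)-(i+1))) ((N^(i+1)) (y cc)) := by
          rw [← Module.End.mul_apply, ← pow_add]
          congr 2
          omega
        rw [h5, htop, map_zero, map_zero]
    exact LinearMap.mem_ker.1 (hle hv)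
  -- the bilinear form on P and the parity argument
  set Bf : (↥P) →ₗ[K] (↥P) →ₗ[K] K :=
    LinearMap.compl₁₂ Q P.subtype ((N^ℓ) ∘ₗ P.subtype) with hBfd
  have hBfapp : ∀ u v : ↥P, Bf u v = Q (u:V) ((N^ℓ) (v:V)) := fun u v => rfl
  have hskewB : ∀ u v : ↥P, Bf u v = - Bf v u := by
    intro u v
    rw [hBfapp, hBfapp, hflip ℓ (u:V) (v:V), hsymm ((N^ℓ) (u:V)) (v:V)]
    have hpow : ((-1:K)^ℓ) * ((-1:K)^k) = -1 := by
      rw [← pow_add, add_comm ℓ k]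
      exact Odd.neg_one_pow hodd
    rw [← mul_assoc, hpow]
    ring
  have hndB : ∀ u : ↥P, (∀ v : ↥P, Bf u v = 0) → u = 0 := by
    intro u hu
    have h1 : (u:V) ∈ P := u.2
    obtain ⟨hk, he⟩ := Submodule.mem_inf.1 h1
    have h2 := hkey (u:V) (LinearMap.mem_ker.1 hk)
      (Module.End.mem_eigenspace_iff.1 he) (fun v hv => hu ⟨v, hv⟩)
    exact Subtype.ext h2
  let bP : Basis (Fin (Module.finrank K ↥P)) K ↥P := Module.finBasis K ↥P
  set Amat := LinearMap.BilinForm.toMatrix bP Bf with hAmat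
  have hdet : Amat.det ≠ 0 := by
    rw [hAmat, ← LinearMap.BilinForm.nondegenerate_iff_det_ne_zero bP]
    exact LinearMap.BilinForm.Nondegenerate.ofSeparatingLeft hndB
  have hAt : Amat.transpose = - Amat := by
    ext i j
    rw [Matrix.transpose_apply, Matrix.neg_apply, hAmat, BilinForm.toMatrix_apply,
      BilinForm.toMatrix_apply]
    exact hskewB (bP j) (bP i)
  have hpar : Even (Module.finrank K ↥P) := by
    by_contra hodd'
    have hoddn : Odd (Module.finrank K ↥P) := Nat.not_even_iff_odd.1 hodd'
    have he1 : Amat.det = -Amat.det := by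
      conv_lhs => rw [← Matrix.det_transpose Amat, hAt]
      rw [Matrix.det_neg, Fintype.card_fin, Odd.neg_one_pow hoddn, neg_one_mul]
    have he2 : (2:K) * Amat.det = 0 := by linear_combination he1
    exact hdet ((mul_eq_zero.1 he2).resolve_left two_ne_zero)
  exact hpar
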